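/- arXiv:1206.7097 — 2 statements merged into one kernel-verified Lean document; each statement's English description precedes it below -/
import Mathlib

section
/- Let φ ∈ H be a unit vector, let λ₂ > 1 and b₁ ∈ ℝ, and suppose: (i) Φ(z) ≥ ½(1 − λ₂)⟨Tz, z⟩ + b₁ for all z ∈ H, and (ii) ⟨Tw, w⟩ ≤ ‖w‖²/λ₂ for every w ∈ H orthogonal to φ. Then J(w) ≥ b₁ for every w ∈ H orthogonal to φ. -/
/-- Under condition (H1) and the variational inequality on `φ^⊥`, the energy
functional is bounded below by `b₁` on the orthogonal complement of the first
eigenfunction: part (c) of the saddle geometry proposition. -/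
theorem bounded_below_on_orthogonal_complement
    {H : Type*} [NormedAddCommGroup H] [InnerProductSpace ℝ H]
    (T : H →L[ℝ] H)
    (Φ J : H → ℝ)
    (hJ : ∀ z : H, J z = 1 / 2 * ‖z‖ ^ 2 - 1 / 2 * (inner ℝ (T z) z : ℝ) + Φ z)
    (φ : H) (hφ : ‖φ‖ = 1)
    (lam₂ b₁ : ℝ) (hlam₂ : 1 < lam₂)
    (hH1 : ∀ z : H, Φ z ≥ 1 / 2 * (1 - lam₂) * (inner ℝ (T z) z : ℝ) + b₁)
    (hvar : ∀ w : H, (inner ℝ w φ : ℝ) = 0 → (inner ℝ (T w) w : ℝ) ≤ ‖w‖ ^ 2 / lam₂) :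
    ∀ w : H, (inner ℝ w φ : ℝ) = 0 → J w ≥ b₁ := by
  intro w hw
  have h1 := hvar w hw
  have h2 := hH1 w
  have h3 : (0:ℝ) ≤ ‖w‖ ^ 2 := by positivity
  have h4 : (0:ℝ) < lam₂ := by linarith
  rw [hJ w]
  rw [le_div_iff₀ h4] at h1
  nlinarith
end

section
/- Suppose λ₁ > 0 and: (i) 0 ≤ ⟨Tz, z⟩ ≤ ‖z‖²/λ₁ for all z ∈ H; (ii) there are α ∈ (0, λ₁), p > 2 and C ≥ 0 such that Φ(z) ≥ ((1 − α)/2)⟨Tz, z⟩ − C‖z‖ᵖ for all z ∈ H; (iii) Φ(0) = 0. Then there exists ρ₀ > 0 such that J(z) ≥ ¼(1 − α/λ₁)‖z‖² > 0 for every z with 0 < ‖z‖ ≤ ρ₀; in particular the origin is a strict local minimum of J. -/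
/-- The origin is a strict local minimum of the energy functional under
conditions (H2), (H3) and the subcritical growth bound. -/
theorem origin_is_strict_local_min
    {H : Type*} [NormedAddCommGroup H] [InnerProductSpace ℝ H]
    (T : H →L[ℝ] H)
    (Φ J : H → ℝ)
    (hJ : ∀ z : H, J z = 1 / 2 * ‖z‖ ^ 2 - 1 / 2 * (inner ℝ (T z) z : ℝ) + Φ z)
    (lam₁ : ℝ) (hlam₁ : 0 < lam₁)
    (hT : ∀ z : H, 0 ≤ (inner ℝ (T z) z : ℝ) ∧ (inner ℝ (T z) z : ℝ) ≤ ‖z‖ ^ 2 / lam₁)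
    (α p C : ℝ) (hα₀ : 0 < α) (hα₁ : α < lam₁) (hp : 2 < p) (hC : 0 ≤ C)
    (hΦ : ∀ z : H, Φ z ≥ (1 - α) / 2 * (inner ℝ (T z) z : ℝ) - C * ‖z‖ ^ p)
    (hΦ0 : Φ 0 = 0) :
    ∃ ρ₀ > (0 : ℝ), ∀ z : H, 0 < ‖z‖ → ‖z‖ ≤ ρ₀ →
      J z ≥ 1 / 4 * (1 - α / lam₁) * ‖z‖ ^ 2 ∧ 0 < 1 / 4 * (1 - α / lam₁) * ‖z‖ ^ 2 := by
  set k : ℝ := 1 / 4 * (1 - α / lam₁) with hk_def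
  have hk : 0 < k := by
    have : α / lam₁ < 1 := (div_lt_one hlam₁).mpr hα₁
    rw [hk_def]; linarith
  have hC1 : (0 : ℝ) < C + 1 := by linarith
  have hr : (0 : ℝ) < k / (C + 1) := div_pos hk hC1
  have hp2 : (0 : ℝ) < p - 2 := by linarith
  refine ⟨min 1 ((k / (C + 1)) ^ (1 / (p - 2))), lt_min one_pos (Real.rpow_pos_of_pos hr _), ?_⟩
  intro z hz hzρ
  have hz2 : ‖z‖ ≤ (k / (C + 1)) ^ (1 / (p - 2)) := le_trans hzρ (min_le_right _ _)
  -- bound ‖z‖ ^ (p - 2)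
  have hpow : ‖z‖ ^ (p - 2) ≤ k / (C + 1) := by
    have := Real.rpow_le_rpow (norm_nonneg z) hz2 (le_of_lt hp2)
    rwa [one_div, Real.rpow_inv_rpow hr.le (ne_of_gt hp2)] at this
  have hsplit : ‖z‖ ^ p = ‖z‖ ^ (p - 2) * ‖z‖ ^ (2 : ℕ) := by
    rw [← Real.rpow_natCast ‖z‖ 2, ← Real.rpow_add hz]
    norm_num
  have hCz : C * ‖z‖ ^ p ≤ k * ‖z‖ ^ (2 : ℕ) := by
    rw [hsplit, ← mul_assoc]
    have h1 : C * ‖z‖ ^ (p - 2) ≤ C * (k / (C + 1)) :=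
      mul_le_mul_of_nonneg_left hpow hC
    have h2 : C * (k / (C + 1)) ≤ k := by
      rw [mul_div_assoc']
      exact div_le_of_le_mul₀ hC1.le hk.le (by nlinarith)
    have hznn : (0:ℝ) ≤ ‖z‖ ^ (2 : ℕ) := by positivity
    exact mul_le_mul_of_nonneg_right (h1.trans h2) hznn
  obtain ⟨hT0, hT1⟩ := hT z
  have hΦz := hΦ z
  have hJz := hJ z
  have hTz : α * (inner ℝ (T z) z : ℝ) ≤ α * (‖z‖ ^ 2 / lam₁) :=
    mul_le_mul_of_nonneg_left hT1 hα₀.le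
  have hkey : J z ≥ k * ‖z‖ ^ 2 := by
    rw [hJz]
    have : α * (‖z‖ ^ 2 / lam₁) = (α / lam₁) * ‖z‖ ^ 2 := by ring
    nlinarith [hCz]
  have hpos : 0 < k * ‖z‖ ^ 2 := by positivity
  exact ⟨by simpa [hk_def, mul_assoc] using hkey, by simpa [hk_def, mul_assoc] using hpos⟩
end
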